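/- For all powers of two m and n with m ≥ 16, n ≥ 4, and m ≤ 4n, letting N be the subgroup of G = G(m,n) generated by a^4, there is no automorphism α of G that induces the inverting map g ↦ g⁻¹ on the quotient G/N; that is, there is no automorphism α of G such that α(g)·g ∈ N for every g ∈ G. -/

import Mathlib

/-- The relators of the presentation `⟨a, b | a^m, b^n, [b,a] = a^4⟩`, where `a` is
`FreeGroup.of true`, `b` is `FreeGroup.of false`, and `[b,a] = b⁻¹a⁻¹ba`. -/
def GRels (m n : ℕ) : Set (FreeGroup Bool) :=
  { FreeGroup.of true ^ m,
    FreeGroup.of false ^ n,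
    (FreeGroup.of false)⁻¹ * (FreeGroup.of true)⁻¹ * FreeGroup.of false *
      FreeGroup.of true * (FreeGroup.of true ^ 4)⁻¹ }

/-- The group `G(m, n) = ⟨a, b | a^m, b^n, [b,a] = a^4⟩`. -/
abbrev Gmn (m n : ℕ) : Type := PresentedGroup (GRels m n)

/-- The image of the generator `a` in `G(m, n)`. -/
def gen_a (m n : ℕ) : Gmn m n := PresentedGroup.of true

/-- The image of the generator `b` in `G(m, n)`. -/
def gen_b (m n : ℕ) : Gmn m n := PresentedGroup.of false

/-! ### Auxiliary number theory -/

lemma aux_L1 (k : ℕ) : (2:ℤ)^(k+2) ∣ (-3)^(2^k) - 1 := by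
  induction k with
  | zero => norm_num
  | succ k ih =>
    obtain ⟨t, ht⟩ := ih
    refine ⟨t * (2^(k+1) * t + 1), ?_⟩
    have h2 : (-3:ℤ)^(2^(k+1)) - 1 = ((-3)^(2^k) - 1) * ((-3)^(2^k) + 1) := by
      rw [pow_succ, pow_mul]; ring
    have h3 : (-3:ℤ)^(2^k) + 1 = 2^(k+2) * t + 2 := by linarith
    rw [h2, ht, h3]; ring

lemma aux_L2 (m n : ℕ) (hm : ∃ i, m = 2 ^ i) (hn : ∃ j, n = 2 ^ j)
    (hm16 : 16 ≤ m) (hmn : m ≤ 4 * n) :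
    ((-3 : ZMod m))^n = 1 := by
  obtain ⟨i, rfl⟩ := hm
  obtain ⟨j, rfl⟩ := hn
  have hi : 4 ≤ i := by
    by_contra h
    push_neg at h
    interval_cases i <;> omega
  have hij : i ≤ j + 2 := by
    have h : (2:ℕ)^i ≤ 2^(j+2) := by
      calc (2:ℕ)^i ≤ 4 * 2^j := hmn
      _ = 2^(j+2) := by ring
    exact (pow_le_pow_iff_right₀ (by norm_num)).mp h
  have key : ((-3 : ZMod (2^i)))^(2^(i-2)) = 1 := by
    have h1 := aux_L1 (i-2)
    have hi2 : i - 2 + 2 = i := by omega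
    rw [hi2] at h1
    have h2 : ((((-3:ℤ))^(2^(i-2)) - 1 : ℤ) : ZMod (2^i)) = 0 := by
      rw [ZMod.intCast_zmod_eq_zero_iff_dvd]
      exact_mod_cast h1
    push_cast at h2
    linear_combination h2
  obtain ⟨c, hc⟩ := pow_dvd_pow 2 (show i - 2 ≤ j by omega)
  rw [hc, pow_mul, key, one_pow]

/-! ### A matrix representation of `G(m,n)` -/

abbrev Kmat (m : ℕ) := Matrix (Fin 2) (Fin 2) (ZMod m)

def Umap {m : ℕ} (x : ZMod m) : (Kmat m)ˣ :=
  ⟨!![1,x;0,1], !![1,-x;0,1],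
   by simp [Matrix.mul_fin_two, Matrix.one_fin_two],
   by simp [Matrix.mul_fin_two, Matrix.one_fin_two]⟩

def Uadd {m : ℕ} : ZMod m →+ Additive (Kmat m)ˣ where
  toFun x := .ofMul (Umap x)
  map_zero' := by
    apply Additive.toMul.injective
    apply Units.ext
    simp [Umap, Matrix.one_fin_two]
  map_add' x y := by
    apply Additive.toMul.injective
    apply Units.ext
    show (Umap (x+y)).val = ((Umap x) * (Umap y)).val
    simp [Umap, Matrix.mul_fin_two, add_comm]

def Uhom {m : ℕ} : Multiplicative (ZMod m) →* (Kmat m)ˣ :=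
  AddMonoidHom.toMultiplicativeLeft Uadd

lemma Uhom_apply {m : ℕ} (x : ZMod m) : (Uhom (.ofAdd x)) = Umap x := rfl

lemma Uhom_eq_one_iff {m : ℕ} (x : ZMod m) : Uhom (.ofAdd x) = 1 ↔ x = 0 := by
  constructor
  · intro h
    have h1 := congrArg Units.val h
    rw [Uhom_apply] at h1
    have h2 := congrFun (congrFun (h1 : (!![1,x;0,1] : Kmat m) = 1) 0) 1
    simpa [Umap, Matrix.one_fin_two] using h2
  · rintro rfl
    apply Units.ext
    simp [Uhom_apply, Umap, Matrix.one_fin_two]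

theorem Gmn_no_inverting_automorphism (m n : ℕ)
    (hm : ∃ i, m = 2 ^ i) (hn : ∃ j, n = 2 ^ j)
    (hm16 : 16 ≤ m) (hn4 : 4 ≤ n) (hmn : m ≤ 4 * n) :
    ¬ ∃ α : Gmn m n ≃* Gmn m n,
      ∀ g : Gmn m n, α g * g ∈ (Subgroup.closure {gen_a m n ^ 4} : Subgroup (Gmn m n)) := by
  rintro ⟨α, hα⟩
  -- abbreviations
  set ga := gen_a m n with hga_def
  set gb := gen_b m n with hgb_def
  -- the concrete representation
  have hpow3n : ((-3 : ZMod m))^n = 1 := aux_L2 m n hm hn hm16 hmn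
  set x : ZMod m := (-3 : ZMod m)^(n-1) with hx_def
  have hx : (-3 : ZMod m) * x = 1 := by
    rw [hx_def, ← pow_succ']
    rw [show n - 1 + 1 = n by omega]
    exact hpow3n
  have hxn : x ^ n = 1 := by
    rw [hx_def, ← pow_mul, mul_comm (n-1) n, pow_mul, hpow3n, one_pow]
  have hx1 : -(3 * x) = 1 := by linear_combination hx
  have hx2 : -(x * 3) = 1 := by linear_combination hx
  let Bu : (Kmat m)ˣ :=
    ⟨!![x,0;0,1], !![-3,0;0,1],
     by simp [Matrix.mul_fin_two, Matrix.one_fin_two, hx, hx1, hx2],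
     by simp [Matrix.mul_fin_two, Matrix.one_fin_two, hx, hx1, hx2]⟩
  let Au : (Kmat m)ˣ := Uhom (.ofAdd 1)
  have hBupow : ∀ k : ℕ, ((Bu ^ k : (Kmat m)ˣ) : Kmat m) = !![x^k,0;0,1] := by
    intro k
    induction k with
    | zero => simp [Matrix.one_fin_two]
    | succ k ih =>
      rw [pow_succ, Units.val_mul, ih]
      show _ * (!![x,0;0,1]) = _
      simp [Matrix.mul_fin_two, pow_succ]
  have hApow : ∀ t : ℤ, (Au ^ t : (Kmat m)ˣ) = Uhom (.ofAdd (t : ZMod m)) := by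
    intro t
    show (Uhom (.ofAdd 1))^t = _
    rw [← map_zpow, ← ofAdd_zsmul]
    norm_num
  have hApowN : ∀ t : ℕ, (Au ^ t : (Kmat m)ˣ) = Uhom (.ofAdd (t : ZMod m)) := by
    intro t
    have := hApow (t : ℤ)
    rw [zpow_natCast] at this
    rw [this]
    norm_num
  -- the representation homomorphism
  have hrels : ∀ r ∈ GRels m n, FreeGroup.lift (fun c : Bool => if c then Au else Bu) r = 1 := by
    intro r hr
    rcases hr with h | h | h
    · subst h
      simp only [map_pow, FreeGroup.lift_apply_of, reduceIte]
      rw [hApowN m, ZMod.natCast_self]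
      exact (Uhom_eq_one_iff 0).mpr rfl
    · subst h
      simp only [map_pow, FreeGroup.lift_apply_of]
      rw [show (if (false = true) then Au else Bu) = Bu from rfl]
      apply Units.ext
      rw [hBupow n, hxn]
      simp [Matrix.one_fin_two]
    · simp only [Set.mem_singleton_iff] at h
      subst h
      simp only [map_mul, map_inv, map_pow, FreeGroup.lift_apply_of, reduceIte]
      apply Units.ext
      have h4 : ((Au ^ 4 : (Kmat m)ˣ) : Kmat m) = !![1,4;0,1] := by
        rw [hApowN 4]; rfl
      have h4i : (((Au ^ 4)⁻¹ : (Kmat m)ˣ) : Kmat m) = !![1,-4;0,1] := by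
        have : (Au ^ 4 : (Kmat m)ˣ) = Umap (4 : ZMod m) := by
          rw [hApowN 4]; rfl
        rw [this]; rfl
      simp only [Units.val_mul, h4i]
      show (!![(-3:ZMod m),0;0,1]) * (!![1,-1;0,1]) * (!![x,0;0,1]) * (!![1,1;0,1]) * (!![1,-4;0,1]) = 1
      ext i j
      fin_cases i <;> fin_cases j <;>
        simp [Matrix.mul_fin_two, Matrix.one_fin_two] <;>
        first
          | rfl
          | linear_combination hx
          | linear_combination (-3 : ZMod m) * hx
  let f : Gmn m n →* (Kmat m)ˣ := PresentedGroup.toGroup hrels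
  have hfa : f ga = Au := PresentedGroup.toGroup.of hrels
  -- key injectivity fact: ga^t = 1 → m ∣ t
  have hord : ∀ t : ℤ, ga ^ t = 1 → (m : ℤ) ∣ t := by
    intro t ht
    have h1 : f (ga ^ t) = 1 := by rw [ht, map_one]
    rw [map_zpow, hfa, hApow] at h1
    rw [← ZMod.intCast_zmod_eq_zero_iff_dvd]
    exact (Uhom_eq_one_iff _).mp h1
  -- relations in G
  have rel3 : gb⁻¹ * ga⁻¹ * gb * ga * (ga ^ 4)⁻¹ = 1 := by
    have hmem : ((FreeGroup.of false)⁻¹ * (FreeGroup.of true)⁻¹ * FreeGroup.of false *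
        FreeGroup.of true * (FreeGroup.of true ^ 4)⁻¹) ∈
        Subgroup.normalClosure (GRels m n) :=
      Subgroup.subset_normalClosure (by right; right; rfl)
    have := (QuotientGroup.eq_one_iff _).mpr hmem
    rw [hga_def, hgb_def]; exact this
  have hba : gb⁻¹ * ga * gb = ga ^ (-3 : ℤ) := by
    have h1 : gb⁻¹ * ga⁻¹ * gb = ga ^ (3:ℕ) := by
      have h2 : gb⁻¹ * ga⁻¹ * gb * ga * (ga ^ 4)⁻¹ * (ga ^ 4 * ga⁻¹) =
          1 * (ga ^ 4 * ga⁻¹) := by rw [rel3]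
      calc gb⁻¹ * ga⁻¹ * gb
          = gb⁻¹ * ga⁻¹ * gb * ga * (ga ^ 4)⁻¹ * (ga ^ 4 * ga⁻¹) := by group
        _ = 1 * (ga ^ 4 * ga⁻¹) := h2
        _ = ga ^ (3:ℕ) := by group
    calc gb⁻¹ * ga * gb = (gb⁻¹ * ga⁻¹ * gb)⁻¹ := by group
      _ = (ga ^ (3:ℕ))⁻¹ := by rw [h1]
      _ = ga ^ (-3 : ℤ) := by group
  have hconj : ∀ t : ℤ, gb⁻¹ * ga ^ t * gb = ga ^ (-3 * t) := by
    intro t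
    calc gb⁻¹ * ga ^ t * gb = gb⁻¹ * ga ^ t * gb⁻¹⁻¹ := by rw [inv_inv]
      _ = (gb⁻¹ * ga * gb⁻¹⁻¹) ^ t := conj_zpow.symm
      _ = (ga ^ (-3:ℤ)) ^ t := by rw [inv_inv, hba]
      _ = ga ^ (-3 * t) := by rw [← zpow_mul]
  -- extract the form of α on the generators
  obtain ⟨k, hk⟩ := (Subgroup.mem_closure_singleton).mp (hα ga)
  obtain ⟨l, hl⟩ := (Subgroup.mem_closure_singleton).mp (hα gb)
  have hαa : α ga = ga ^ (4 * k - 1) := by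
    have : α ga = (ga ^ 4) ^ k * ga⁻¹ := by rw [hk]; group
    rw [this]
    group
  have hαb : α gb = (ga ^ 4) ^ l * gb⁻¹ := by rw [hl]; group
  set s : ℤ := 4 * k - 1 with hs_def
  -- apply α to the relation hba
  have hkey : gb * ga ^ s * gb⁻¹ = ga ^ (-3 * s) := by
    have h1 : α (gb⁻¹ * ga * gb) = α (ga ^ (-3:ℤ)) := congrArg α hba
    rw [map_mul, map_mul, map_inv, map_zpow, hαa, hαb] at h1
    have hc : (ga^4)^l = ga ^ ((4:ℤ) * l) := by
      rw [← zpow_natCast ga 4, ← zpow_mul]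
      norm_num
    have hcancel : (ga ^ ((4:ℤ)*l))⁻¹ * ga ^ s * ga ^ ((4:ℤ)*l) = ga ^ s := by
      rw [← zpow_neg, ← zpow_add, ← zpow_add]
      congr 1
      ring
    have h2 : ((ga ^ 4) ^ l * gb⁻¹)⁻¹ * ga ^ s * ((ga ^ 4) ^ l * gb⁻¹) =
        gb * ga ^ s * gb⁻¹ := by
      rw [hc]
      calc (ga ^ ((4:ℤ)*l) * gb⁻¹)⁻¹ * ga ^ s * (ga ^ ((4:ℤ)*l) * gb⁻¹)
          = gb * ((ga ^ ((4:ℤ)*l))⁻¹ * ga ^ s * ga ^ ((4:ℤ)*l)) * gb⁻¹ := by group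
        _ = gb * ga ^ s * gb⁻¹ := by rw [hcancel]
    rw [h2] at h1
    rw [h1, ← zpow_mul]
    congr 1
    ring
  -- conjugate back and conclude ga ^ (8 s) = 1
  have h9 : ga ^ s = ga ^ (9 * s) := by
    calc ga ^ s = gb⁻¹ * (gb * ga ^ s * gb⁻¹) * gb := by group
      _ = gb⁻¹ * ga ^ (-3 * s) * gb := by rw [hkey]
      _ = ga ^ (-3 * (-3 * s)) := hconj _
      _ = ga ^ (9 * s) := by congr 1; ring
  have h8 : ga ^ (8 * s) = 1 := by
    have hmul : ga ^ (8 * s) * ga ^ s = 1 * ga ^ s := by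
      rw [one_mul, ← zpow_add, show 8 * s + s = 9 * s by ring, ← h9]
    exact mul_right_cancel hmul
  have hdvd : (m : ℤ) ∣ 8 * s := hord _ h8
  obtain ⟨i, rfl⟩ := hm
  have hi : 4 ≤ i := by
    by_contra h
    push_neg at h
    interval_cases i <;> omega
  have h16 : (16 : ℤ) ∣ (2^i : ℕ) := by
    have : (2:ℤ)^4 ∣ (2:ℤ)^i := pow_dvd_pow 2 hi
    push_cast
    norm_num at this ⊢
    exact this
  have : (16:ℤ) ∣ 8 * s := dvd_trans h16 hdvd
  omega
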